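/- The octonion-like algebra is a seminormed division algebra: if X in A satisfies N₁(X) ≠ 0 and N₋₁(X) ≠ 0, then there exists a unique W in A such that X·W = e₀ and W·X = e₀. -/

import Mathlib

noncomputable section

/-- Standard basis vectors of `A := Fin 8 → ℝ`: `e i j = 1` if `i = j`, else `0`. -/
def e (i : Fin 8) : Fin 8 → ℝ := fun j => if i = j then 1 else 0

/-- The octonion-like (split-biquaternion) product on `Fin 8 → ℝ`: the unique bilinear
multiplication determined by the multiplication table on the basis `e 0, …, e 7`
(with `e 0` the two-sided identity, `e 7 · e 7 = e 0`, `e i · e i = -e 0` for `1 ≤ i ≤ 6`, etc.),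
written out in coordinates. -/
def omul (X Y : Fin 8 → ℝ) : Fin 8 → ℝ :=
  ![X 0*Y 0 - X 1*Y 1 - X 2*Y 2 - X 3*Y 3 - X 4*Y 4 - X 5*Y 5 - X 6*Y 6 + X 7*Y 7,
    X 1*Y 0 + X 0*Y 1 - X 3*Y 2 + X 2*Y 3 + X 5*Y 4 - X 4*Y 5 - X 7*Y 6 - X 6*Y 7,
    X 2*Y 0 + X 3*Y 1 + X 0*Y 2 - X 1*Y 3 - X 6*Y 4 - X 7*Y 5 + X 4*Y 6 - X 5*Y 7,
    X 3*Y 0 - X 2*Y 1 + X 1*Y 2 + X 0*Y 3 - X 7*Y 4 + X 6*Y 5 - X 5*Y 6 - X 4*Y 7,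
    X 4*Y 0 - X 5*Y 1 + X 6*Y 2 - X 7*Y 3 + X 0*Y 4 + X 1*Y 5 - X 2*Y 6 - X 3*Y 7,
    X 5*Y 0 + X 4*Y 1 - X 7*Y 2 - X 6*Y 3 - X 1*Y 4 + X 0*Y 5 + X 3*Y 6 - X 2*Y 7,
    X 6*Y 0 - X 7*Y 1 - X 4*Y 2 + X 5*Y 3 + X 2*Y 4 - X 3*Y 5 + X 0*Y 6 - X 1*Y 7,
    X 7*Y 0 + X 6*Y 1 + X 5*Y 2 + X 4*Y 3 + X 3*Y 4 + X 2*Y 5 + X 1*Y 6 + X 0*Y 7]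

/-- The conjugate (reverse) of `X`: negate the six imaginary coordinates `1,…,6`. -/
def oconj (X : Fin 8 → ℝ) : Fin 8 → ℝ :=
  ![X 0, -X 1, -X 2, -X 3, -X 4, -X 5, -X 6, X 7]

/-- `a(X) = ∑ i, (X i)²`. -/
def aQ (X : Fin 8 → ℝ) : ℝ := ∑ i, (X i)^2

/-- `b(X) = 2 X₀X₇ − 2 (X₁X₆ + X₂X₅ + X₃X₄)`. -/
def bQ (X : Fin 8 → ℝ) : ℝ := 2*(X 0)*(X 7) - 2*((X 1)*(X 6) + (X 2)*(X 5) + (X 3)*(X 4))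

/-- Squared seminorm `N_λ(X) = a(X) + λ·b(X)` (used with `λ = 1` and `λ = -1`). -/
def Nsq (lam : ℝ) (X : Fin 8 → ℝ) : ℝ := aQ X + lam * bQ X

/-- Matrix of left multiplication by `X`: column `j` is the coordinate vector of `X · eⱼ`. -/
def MX (X : Fin 8 → ℝ) : Matrix (Fin 8) (Fin 8) ℝ := Matrix.of fun i j => omul X (e j) i

/-- Matrix of right multiplication by `X`: column `j` is the coordinate vector of `eⱼ · X`. -/
def PX (X : Fin 8 → ℝ) : Matrix (Fin 8) (Fin 8) ℝ := Matrix.of fun i j => omul (e j) X i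

/-- The matrix `J` with `J 0 7 = J 7 0 = 1`, `J i (7-i) = -1` for `1 ≤ i ≤ 6`, else `0`. -/
def J : Matrix (Fin 8) (Fin 8) ℝ :=
  !![0, 0, 0, 0, 0, 0, 0, 1;
     0, 0, 0, 0, 0, 0, -1, 0;
     0, 0, 0, 0, 0, -1, 0, 0;
     0, 0, 0, 0, -1, 0, 0, 0;
     0, 0, 0, -1, 0, 0, 0, 0;
     0, 0, -1, 0, 0, 0, 0, 0;
     0, -1, 0, 0, 0, 0, 0, 0;
     1, 0, 0, 0, 0, 0, 0, 0]

set_option maxHeartbeats 4000000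

lemma omul_apply0 (X Y : Fin 8 → ℝ) : omul X Y 0 = X 0*Y 0 - X 1*Y 1 - X 2*Y 2 - X 3*Y 3 - X 4*Y 4 - X 5*Y 5 - X 6*Y 6 + X 7*Y 7 := rfl
lemma omul_apply1 (X Y : Fin 8 → ℝ) : omul X Y 1 = X 1*Y 0 + X 0*Y 1 - X 3*Y 2 + X 2*Y 3 + X 5*Y 4 - X 4*Y 5 - X 7*Y 6 - X 6*Y 7 := rfl
lemma omul_apply2 (X Y : Fin 8 → ℝ) : omul X Y 2 = X 2*Y 0 + X 3*Y 1 + X 0*Y 2 - X 1*Y 3 - X 6*Y 4 - X 7*Y 5 + X 4*Y 6 - X 5*Y 7 := rfl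
lemma omul_apply3 (X Y : Fin 8 → ℝ) : omul X Y 3 = X 3*Y 0 - X 2*Y 1 + X 1*Y 2 + X 0*Y 3 - X 7*Y 4 + X 6*Y 5 - X 5*Y 6 - X 4*Y 7 := rfl
lemma omul_apply4 (X Y : Fin 8 → ℝ) : omul X Y 4 = X 4*Y 0 - X 5*Y 1 + X 6*Y 2 - X 7*Y 3 + X 0*Y 4 + X 1*Y 5 - X 2*Y 6 - X 3*Y 7 := rfl
lemma omul_apply5 (X Y : Fin 8 → ℝ) : omul X Y 5 = X 5*Y 0 + X 4*Y 1 - X 7*Y 2 - X 6*Y 3 - X 1*Y 4 + X 0*Y 5 + X 3*Y 6 - X 2*Y 7 := rfl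
lemma omul_apply6 (X Y : Fin 8 → ℝ) : omul X Y 6 = X 6*Y 0 - X 7*Y 1 - X 4*Y 2 + X 5*Y 3 + X 2*Y 4 - X 3*Y 5 + X 0*Y 6 - X 1*Y 7 := rfl
lemma omul_apply7 (X Y : Fin 8 → ℝ) : omul X Y 7 = X 7*Y 0 + X 6*Y 1 + X 5*Y 2 + X 4*Y 3 + X 3*Y 4 + X 2*Y 5 + X 1*Y 6 + X 0*Y 7 := rfl
lemma e0_0 : e 0 (0 : Fin 8) = 1 := rfl
lemma e0_1 : e 0 (1 : Fin 8) = 0 := rfl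
lemma e0_2 : e 0 (2 : Fin 8) = 0 := rfl
lemma e0_3 : e 0 (3 : Fin 8) = 0 := rfl
lemma e0_4 : e 0 (4 : Fin 8) = 0 := rfl
lemma e0_5 : e 0 (5 : Fin 8) = 0 := rfl
lemma e0_6 : e 0 (6 : Fin 8) = 0 := rfl
lemma e0_7 : e 0 (7 : Fin 8) = 0 := rfl
lemma omul_one (X : Fin 8 → ℝ) : omul X (e 0) = X := by
  have h0 : omul X (e 0) (0 : Fin 8) = X (0 : Fin 8) := by rw [omul_apply0, e0_0, e0_1, e0_2, e0_3, e0_4, e0_5, e0_6, e0_7]; ring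
  have h1 : omul X (e 0) (1 : Fin 8) = X (1 : Fin 8) := by rw [omul_apply1, e0_0, e0_1, e0_2, e0_3, e0_4, e0_5, e0_6, e0_7]; ring
  have h2 : omul X (e 0) (2 : Fin 8) = X (2 : Fin 8) := by rw [omul_apply2, e0_0, e0_1, e0_2, e0_3, e0_4, e0_5, e0_6, e0_7]; ring
  have h3 : omul X (e 0) (3 : Fin 8) = X (3 : Fin 8) := by rw [omul_apply3, e0_0, e0_1, e0_2, e0_3, e0_4, e0_5, e0_6, e0_7]; ring
  have h4 : omul X (e 0) (4 : Fin 8) = X (4 : Fin 8) := by rw [omul_apply4, e0_0, e0_1, e0_2, e0_3, e0_4, e0_5, e0_6, e0_7]; ring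
  have h5 : omul X (e 0) (5 : Fin 8) = X (5 : Fin 8) := by rw [omul_apply5, e0_0, e0_1, e0_2, e0_3, e0_4, e0_5, e0_6, e0_7]; ring
  have h6 : omul X (e 0) (6 : Fin 8) = X (6 : Fin 8) := by rw [omul_apply6, e0_0, e0_1, e0_2, e0_3, e0_4, e0_5, e0_6, e0_7]; ring
  have h7 : omul X (e 0) (7 : Fin 8) = X (7 : Fin 8) := by rw [omul_apply7, e0_0, e0_1, e0_2, e0_3, e0_4, e0_5, e0_6, e0_7]; ring
  funext k; fin_cases k
  exacts [h0, h1, h2, h3, h4, h5, h6, h7]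
lemma one_omul (X : Fin 8 → ℝ) : omul (e 0) X = X := by
  have h0 : omul (e 0) X (0 : Fin 8) = X (0 : Fin 8) := by rw [omul_apply0, e0_0, e0_1, e0_2, e0_3, e0_4, e0_5, e0_6, e0_7]; ring
  have h1 : omul (e 0) X (1 : Fin 8) = X (1 : Fin 8) := by rw [omul_apply1, e0_0, e0_1, e0_2, e0_3, e0_4, e0_5, e0_6, e0_7]; ring
  have h2 : omul (e 0) X (2 : Fin 8) = X (2 : Fin 8) := by rw [omul_apply2, e0_0, e0_1, e0_2, e0_3, e0_4, e0_5, e0_6, e0_7]; ring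
  have h3 : omul (e 0) X (3 : Fin 8) = X (3 : Fin 8) := by rw [omul_apply3, e0_0, e0_1, e0_2, e0_3, e0_4, e0_5, e0_6, e0_7]; ring
  have h4 : omul (e 0) X (4 : Fin 8) = X (4 : Fin 8) := by rw [omul_apply4, e0_0, e0_1, e0_2, e0_3, e0_4, e0_5, e0_6, e0_7]; ring
  have h5 : omul (e 0) X (5 : Fin 8) = X (5 : Fin 8) := by rw [omul_apply5, e0_0, e0_1, e0_2, e0_3, e0_4, e0_5, e0_6, e0_7]; ring
  have h6 : omul (e 0) X (6 : Fin 8) = X (6 : Fin 8) := by rw [omul_apply6, e0_0, e0_1, e0_2, e0_3, e0_4, e0_5, e0_6, e0_7]; ring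
  have h7 : omul (e 0) X (7 : Fin 8) = X (7 : Fin 8) := by rw [omul_apply7, e0_0, e0_1, e0_2, e0_3, e0_4, e0_5, e0_6, e0_7]; ring
  funext k; fin_cases k
  exacts [h0, h1, h2, h3, h4, h5, h6, h7]
lemma omul_assoc (X Y Z : Fin 8 → ℝ) : omul (omul X Y) Z = omul X (omul Y Z) := by
  have h0 : omul (omul X Y) Z (0 : Fin 8) = omul X (omul Y Z) (0 : Fin 8) := by simp only [omul_apply0, omul_apply1, omul_apply2, omul_apply3, omul_apply4, omul_apply5, omul_apply6, omul_apply7]; ring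
  have h1 : omul (omul X Y) Z (1 : Fin 8) = omul X (omul Y Z) (1 : Fin 8) := by simp only [omul_apply0, omul_apply1, omul_apply2, omul_apply3, omul_apply4, omul_apply5, omul_apply6, omul_apply7]; ring
  have h2 : omul (omul X Y) Z (2 : Fin 8) = omul X (omul Y Z) (2 : Fin 8) := by simp only [omul_apply0, omul_apply1, omul_apply2, omul_apply3, omul_apply4, omul_apply5, omul_apply6, omul_apply7]; ring
  have h3 : omul (omul X Y) Z (3 : Fin 8) = omul X (omul Y Z) (3 : Fin 8) := by simp only [omul_apply0, omul_apply1, omul_apply2, omul_apply3, omul_apply4, omul_apply5, omul_apply6, omul_apply7]; ring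
  have h4 : omul (omul X Y) Z (4 : Fin 8) = omul X (omul Y Z) (4 : Fin 8) := by simp only [omul_apply0, omul_apply1, omul_apply2, omul_apply3, omul_apply4, omul_apply5, omul_apply6, omul_apply7]; ring
  have h5 : omul (omul X Y) Z (5 : Fin 8) = omul X (omul Y Z) (5 : Fin 8) := by simp only [omul_apply0, omul_apply1, omul_apply2, omul_apply3, omul_apply4, omul_apply5, omul_apply6, omul_apply7]; ring
  have h6 : omul (omul X Y) Z (6 : Fin 8) = omul X (omul Y Z) (6 : Fin 8) := by simp only [omul_apply0, omul_apply1, omul_apply2, omul_apply3, omul_apply4, omul_apply5, omul_apply6, omul_apply7]; ring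
  have h7 : omul (omul X Y) Z (7 : Fin 8) = omul X (omul Y Z) (7 : Fin 8) := by simp only [omul_apply0, omul_apply1, omul_apply2, omul_apply3, omul_apply4, omul_apply5, omul_apply6, omul_apply7]; ring
  funext k; fin_cases k
  exacts [h0, h1, h2, h3, h4, h5, h6, h7]

/-- Seminormed division algebra: if `N₁(X) ≠ 0` and `N₋₁(X) ≠ 0` then `X` has a unique
two-sided inverse. -/
theorem exists_unique_inverse (X : Fin 8 → ℝ)
    (h1 : Nsq 1 X ≠ 0) (h2 : Nsq (-1) X ≠ 0) :
    ∃! W : Fin 8 → ℝ, omul X W = e 0 ∧ omul W X = e 0 := by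
  have h1' : (X 0^2 + X 1^2 + X 2^2 + X 3^2 + X 4^2 + X 5^2 + X 6^2 + X 7^2) + (2*X 0*X 7 - 2*(X 1*X 6 + X 2*X 5 + X 3*X 4)) ≠ 0 := by
    intro h; apply h1
    simp only [Nsq, aQ, bQ, Fin.sum_univ_eight]; nlinarith [h]
  have h2' : (X 0^2 + X 1^2 + X 2^2 + X 3^2 + X 4^2 + X 5^2 + X 6^2 + X 7^2) - (2*X 0*X 7 - 2*(X 1*X 6 + X 2*X 5 + X 3*X 4)) ≠ 0 := by
    intro h; apply h2
    simp only [Nsq, aQ, bQ, Fin.sum_univ_eight]; nlinarith [h]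
  have hd : (((X 0^2 + X 1^2 + X 2^2 + X 3^2 + X 4^2 + X 5^2 + X 6^2 + X 7^2) + (2*X 0*X 7 - 2*(X 1*X 6 + X 2*X 5 + X 3*X 4))) * ((X 0^2 + X 1^2 + X 2^2 + X 3^2 + X 4^2 + X 5^2 + X 6^2 + X 7^2) - (2*X 0*X 7 - 2*(X 1*X 6 + X 2*X 5 + X 3*X 4)))) ≠ 0 := mul_ne_zero h1' h2'
  set W : Fin 8 → ℝ :=
    ![(X 0*(X 0^2 + X 1^2 + X 2^2 + X 3^2 + X 4^2 + X 5^2 + X 6^2 + X 7^2) - X 7*(2*X 0*X 7 - 2*(X 1*X 6 + X 2*X 5 + X 3*X 4))) / (((X 0^2 + X 1^2 + X 2^2 + X 3^2 + X 4^2 + X 5^2 + X 6^2 + X 7^2) + (2*X 0*X 7 - 2*(X 1*X 6 + X 2*X 5 + X 3*X 4))) * ((X 0^2 + X 1^2 + X 2^2 + X 3^2 + X 4^2 + X 5^2 + X 6^2 + X 7^2) - (2*X 0*X 7 - 2*(X 1*X 6 + X 2*X 5 + X 3*X 4)))),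
      (-(X 1*(X 0^2 + X 1^2 + X 2^2 + X 3^2 + X 4^2 + X 5^2 + X 6^2 + X 7^2)) - X 6*(2*X 0*X 7 - 2*(X 1*X 6 + X 2*X 5 + X 3*X 4))) / (((X 0^2 + X 1^2 + X 2^2 + X 3^2 + X 4^2 + X 5^2 + X 6^2 + X 7^2) + (2*X 0*X 7 - 2*(X 1*X 6 + X 2*X 5 + X 3*X 4))) * ((X 0^2 + X 1^2 + X 2^2 + X 3^2 + X 4^2 + X 5^2 + X 6^2 + X 7^2) - (2*X 0*X 7 - 2*(X 1*X 6 + X 2*X 5 + X 3*X 4)))),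
      (-(X 2*(X 0^2 + X 1^2 + X 2^2 + X 3^2 + X 4^2 + X 5^2 + X 6^2 + X 7^2)) - X 5*(2*X 0*X 7 - 2*(X 1*X 6 + X 2*X 5 + X 3*X 4))) / (((X 0^2 + X 1^2 + X 2^2 + X 3^2 + X 4^2 + X 5^2 + X 6^2 + X 7^2) + (2*X 0*X 7 - 2*(X 1*X 6 + X 2*X 5 + X 3*X 4))) * ((X 0^2 + X 1^2 + X 2^2 + X 3^2 + X 4^2 + X 5^2 + X 6^2 + X 7^2) - (2*X 0*X 7 - 2*(X 1*X 6 + X 2*X 5 + X 3*X 4)))),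
      (-(X 3*(X 0^2 + X 1^2 + X 2^2 + X 3^2 + X 4^2 + X 5^2 + X 6^2 + X 7^2)) - X 4*(2*X 0*X 7 - 2*(X 1*X 6 + X 2*X 5 + X 3*X 4))) / (((X 0^2 + X 1^2 + X 2^2 + X 3^2 + X 4^2 + X 5^2 + X 6^2 + X 7^2) + (2*X 0*X 7 - 2*(X 1*X 6 + X 2*X 5 + X 3*X 4))) * ((X 0^2 + X 1^2 + X 2^2 + X 3^2 + X 4^2 + X 5^2 + X 6^2 + X 7^2) - (2*X 0*X 7 - 2*(X 1*X 6 + X 2*X 5 + X 3*X 4)))),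
      (-(X 4*(X 0^2 + X 1^2 + X 2^2 + X 3^2 + X 4^2 + X 5^2 + X 6^2 + X 7^2)) - X 3*(2*X 0*X 7 - 2*(X 1*X 6 + X 2*X 5 + X 3*X 4))) / (((X 0^2 + X 1^2 + X 2^2 + X 3^2 + X 4^2 + X 5^2 + X 6^2 + X 7^2) + (2*X 0*X 7 - 2*(X 1*X 6 + X 2*X 5 + X 3*X 4))) * ((X 0^2 + X 1^2 + X 2^2 + X 3^2 + X 4^2 + X 5^2 + X 6^2 + X 7^2) - (2*X 0*X 7 - 2*(X 1*X 6 + X 2*X 5 + X 3*X 4)))),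
      (-(X 5*(X 0^2 + X 1^2 + X 2^2 + X 3^2 + X 4^2 + X 5^2 + X 6^2 + X 7^2)) - X 2*(2*X 0*X 7 - 2*(X 1*X 6 + X 2*X 5 + X 3*X 4))) / (((X 0^2 + X 1^2 + X 2^2 + X 3^2 + X 4^2 + X 5^2 + X 6^2 + X 7^2) + (2*X 0*X 7 - 2*(X 1*X 6 + X 2*X 5 + X 3*X 4))) * ((X 0^2 + X 1^2 + X 2^2 + X 3^2 + X 4^2 + X 5^2 + X 6^2 + X 7^2) - (2*X 0*X 7 - 2*(X 1*X 6 + X 2*X 5 + X 3*X 4)))),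
      (-(X 6*(X 0^2 + X 1^2 + X 2^2 + X 3^2 + X 4^2 + X 5^2 + X 6^2 + X 7^2)) - X 1*(2*X 0*X 7 - 2*(X 1*X 6 + X 2*X 5 + X 3*X 4))) / (((X 0^2 + X 1^2 + X 2^2 + X 3^2 + X 4^2 + X 5^2 + X 6^2 + X 7^2) + (2*X 0*X 7 - 2*(X 1*X 6 + X 2*X 5 + X 3*X 4))) * ((X 0^2 + X 1^2 + X 2^2 + X 3^2 + X 4^2 + X 5^2 + X 6^2 + X 7^2) - (2*X 0*X 7 - 2*(X 1*X 6 + X 2*X 5 + X 3*X 4)))),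
      (X 7*(X 0^2 + X 1^2 + X 2^2 + X 3^2 + X 4^2 + X 5^2 + X 6^2 + X 7^2) - X 0*(2*X 0*X 7 - 2*(X 1*X 6 + X 2*X 5 + X 3*X 4))) / (((X 0^2 + X 1^2 + X 2^2 + X 3^2 + X 4^2 + X 5^2 + X 6^2 + X 7^2) + (2*X 0*X 7 - 2*(X 1*X 6 + X 2*X 5 + X 3*X 4))) * ((X 0^2 + X 1^2 + X 2^2 + X 3^2 + X 4^2 + X 5^2 + X 6^2 + X 7^2) - (2*X 0*X 7 - 2*(X 1*X 6 + X 2*X 5 + X 3*X 4))))] with hWdef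
  have hW0 : W (0 : Fin 8) = (X 0*(X 0^2 + X 1^2 + X 2^2 + X 3^2 + X 4^2 + X 5^2 + X 6^2 + X 7^2) - X 7*(2*X 0*X 7 - 2*(X 1*X 6 + X 2*X 5 + X 3*X 4))) / (((X 0^2 + X 1^2 + X 2^2 + X 3^2 + X 4^2 + X 5^2 + X 6^2 + X 7^2) + (2*X 0*X 7 - 2*(X 1*X 6 + X 2*X 5 + X 3*X 4))) * ((X 0^2 + X 1^2 + X 2^2 + X 3^2 + X 4^2 + X 5^2 + X 6^2 + X 7^2) - (2*X 0*X 7 - 2*(X 1*X 6 + X 2*X 5 + X 3*X 4)))) := rfl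
  have hW1 : W (1 : Fin 8) = (-(X 1*(X 0^2 + X 1^2 + X 2^2 + X 3^2 + X 4^2 + X 5^2 + X 6^2 + X 7^2)) - X 6*(2*X 0*X 7 - 2*(X 1*X 6 + X 2*X 5 + X 3*X 4))) / (((X 0^2 + X 1^2 + X 2^2 + X 3^2 + X 4^2 + X 5^2 + X 6^2 + X 7^2) + (2*X 0*X 7 - 2*(X 1*X 6 + X 2*X 5 + X 3*X 4))) * ((X 0^2 + X 1^2 + X 2^2 + X 3^2 + X 4^2 + X 5^2 + X 6^2 + X 7^2) - (2*X 0*X 7 - 2*(X 1*X 6 + X 2*X 5 + X 3*X 4)))) := rfl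
  have hW2 : W (2 : Fin 8) = (-(X 2*(X 0^2 + X 1^2 + X 2^2 + X 3^2 + X 4^2 + X 5^2 + X 6^2 + X 7^2)) - X 5*(2*X 0*X 7 - 2*(X 1*X 6 + X 2*X 5 + X 3*X 4))) / (((X 0^2 + X 1^2 + X 2^2 + X 3^2 + X 4^2 + X 5^2 + X 6^2 + X 7^2) + (2*X 0*X 7 - 2*(X 1*X 6 + X 2*X 5 + X 3*X 4))) * ((X 0^2 + X 1^2 + X 2^2 + X 3^2 + X 4^2 + X 5^2 + X 6^2 + X 7^2) - (2*X 0*X 7 - 2*(X 1*X 6 + X 2*X 5 + X 3*X 4)))) := rfl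
  have hW3 : W (3 : Fin 8) = (-(X 3*(X 0^2 + X 1^2 + X 2^2 + X 3^2 + X 4^2 + X 5^2 + X 6^2 + X 7^2)) - X 4*(2*X 0*X 7 - 2*(X 1*X 6 + X 2*X 5 + X 3*X 4))) / (((X 0^2 + X 1^2 + X 2^2 + X 3^2 + X 4^2 + X 5^2 + X 6^2 + X 7^2) + (2*X 0*X 7 - 2*(X 1*X 6 + X 2*X 5 + X 3*X 4))) * ((X 0^2 + X 1^2 + X 2^2 + X 3^2 + X 4^2 + X 5^2 + X 6^2 + X 7^2) - (2*X 0*X 7 - 2*(X 1*X 6 + X 2*X 5 + X 3*X 4)))) := rfl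
  have hW4 : W (4 : Fin 8) = (-(X 4*(X 0^2 + X 1^2 + X 2^2 + X 3^2 + X 4^2 + X 5^2 + X 6^2 + X 7^2)) - X 3*(2*X 0*X 7 - 2*(X 1*X 6 + X 2*X 5 + X 3*X 4))) / (((X 0^2 + X 1^2 + X 2^2 + X 3^2 + X 4^2 + X 5^2 + X 6^2 + X 7^2) + (2*X 0*X 7 - 2*(X 1*X 6 + X 2*X 5 + X 3*X 4))) * ((X 0^2 + X 1^2 + X 2^2 + X 3^2 + X 4^2 + X 5^2 + X 6^2 + X 7^2) - (2*X 0*X 7 - 2*(X 1*X 6 + X 2*X 5 + X 3*X 4)))) := rfl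
  have hW5 : W (5 : Fin 8) = (-(X 5*(X 0^2 + X 1^2 + X 2^2 + X 3^2 + X 4^2 + X 5^2 + X 6^2 + X 7^2)) - X 2*(2*X 0*X 7 - 2*(X 1*X 6 + X 2*X 5 + X 3*X 4))) / (((X 0^2 + X 1^2 + X 2^2 + X 3^2 + X 4^2 + X 5^2 + X 6^2 + X 7^2) + (2*X 0*X 7 - 2*(X 1*X 6 + X 2*X 5 + X 3*X 4))) * ((X 0^2 + X 1^2 + X 2^2 + X 3^2 + X 4^2 + X 5^2 + X 6^2 + X 7^2) - (2*X 0*X 7 - 2*(X 1*X 6 + X 2*X 5 + X 3*X 4)))) := rfl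
  have hW6 : W (6 : Fin 8) = (-(X 6*(X 0^2 + X 1^2 + X 2^2 + X 3^2 + X 4^2 + X 5^2 + X 6^2 + X 7^2)) - X 1*(2*X 0*X 7 - 2*(X 1*X 6 + X 2*X 5 + X 3*X 4))) / (((X 0^2 + X 1^2 + X 2^2 + X 3^2 + X 4^2 + X 5^2 + X 6^2 + X 7^2) + (2*X 0*X 7 - 2*(X 1*X 6 + X 2*X 5 + X 3*X 4))) * ((X 0^2 + X 1^2 + X 2^2 + X 3^2 + X 4^2 + X 5^2 + X 6^2 + X 7^2) - (2*X 0*X 7 - 2*(X 1*X 6 + X 2*X 5 + X 3*X 4)))) := rfl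
  have hW7 : W (7 : Fin 8) = (X 7*(X 0^2 + X 1^2 + X 2^2 + X 3^2 + X 4^2 + X 5^2 + X 6^2 + X 7^2) - X 0*(2*X 0*X 7 - 2*(X 1*X 6 + X 2*X 5 + X 3*X 4))) / (((X 0^2 + X 1^2 + X 2^2 + X 3^2 + X 4^2 + X 5^2 + X 6^2 + X 7^2) + (2*X 0*X 7 - 2*(X 1*X 6 + X 2*X 5 + X 3*X 4))) * ((X 0^2 + X 1^2 + X 2^2 + X 3^2 + X 4^2 + X 5^2 + X 6^2 + X 7^2) - (2*X 0*X 7 - 2*(X 1*X 6 + X 2*X 5 + X 3*X 4)))) := rfl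
  have g0 : omul X W (0 : Fin 8) = e 0 (0 : Fin 8) := by
    rw [omul_apply0, hW0, hW1, hW2, hW3, hW4, hW5, hW6, hW7, e0_0]
    simp only [mul_div_assoc', div_mul_eq_mul_div, ← add_div, div_sub_div_same]
    rw [div_eq_one_iff_eq hd]
    ring
  have f0 : omul W X (0 : Fin 8) = e 0 (0 : Fin 8) := by
    rw [omul_apply0, hW0, hW1, hW2, hW3, hW4, hW5, hW6, hW7, e0_0]
    simp only [mul_div_assoc', div_mul_eq_mul_div, ← add_div, div_sub_div_same]
    rw [div_eq_one_iff_eq hd]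
    ring
  have g1 : omul X W (1 : Fin 8) = e 0 (1 : Fin 8) := by
    rw [omul_apply1, hW0, hW1, hW2, hW3, hW4, hW5, hW6, hW7, e0_1]
    field_simp
    ring
  have f1 : omul W X (1 : Fin 8) = e 0 (1 : Fin 8) := by
    rw [omul_apply1, hW0, hW1, hW2, hW3, hW4, hW5, hW6, hW7, e0_1]
    field_simp
    ring
  have g2 : omul X W (2 : Fin 8) = e 0 (2 : Fin 8) := by
    rw [omul_apply2, hW0, hW1, hW2, hW3, hW4, hW5, hW6, hW7, e0_2]
    field_simp
    ring
  have f2 : omul W X (2 : Fin 8) = e 0 (2 : Fin 8) := by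
    rw [omul_apply2, hW0, hW1, hW2, hW3, hW4, hW5, hW6, hW7, e0_2]
    field_simp
    ring
  have g3 : omul X W (3 : Fin 8) = e 0 (3 : Fin 8) := by
    rw [omul_apply3, hW0, hW1, hW2, hW3, hW4, hW5, hW6, hW7, e0_3]
    field_simp
    ring
  have f3 : omul W X (3 : Fin 8) = e 0 (3 : Fin 8) := by
    rw [omul_apply3, hW0, hW1, hW2, hW3, hW4, hW5, hW6, hW7, e0_3]
    field_simp
    ring
  have g4 : omul X W (4 : Fin 8) = e 0 (4 : Fin 8) := by
    rw [omul_apply4, hW0, hW1, hW2, hW3, hW4, hW5, hW6, hW7, e0_4]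
    field_simp
    ring
  have f4 : omul W X (4 : Fin 8) = e 0 (4 : Fin 8) := by
    rw [omul_apply4, hW0, hW1, hW2, hW3, hW4, hW5, hW6, hW7, e0_4]
    field_simp
    ring
  have g5 : omul X W (5 : Fin 8) = e 0 (5 : Fin 8) := by
    rw [omul_apply5, hW0, hW1, hW2, hW3, hW4, hW5, hW6, hW7, e0_5]
    field_simp
    ring
  have f5 : omul W X (5 : Fin 8) = e 0 (5 : Fin 8) := by
    rw [omul_apply5, hW0, hW1, hW2, hW3, hW4, hW5, hW6, hW7, e0_5]
    field_simp
    ring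
  have g6 : omul X W (6 : Fin 8) = e 0 (6 : Fin 8) := by
    rw [omul_apply6, hW0, hW1, hW2, hW3, hW4, hW5, hW6, hW7, e0_6]
    field_simp
    ring
  have f6 : omul W X (6 : Fin 8) = e 0 (6 : Fin 8) := by
    rw [omul_apply6, hW0, hW1, hW2, hW3, hW4, hW5, hW6, hW7, e0_6]
    field_simp
    ring
  have g7 : omul X W (7 : Fin 8) = e 0 (7 : Fin 8) := by
    rw [omul_apply7, hW0, hW1, hW2, hW3, hW4, hW5, hW6, hW7, e0_7]
    field_simp
    ring
  have f7 : omul W X (7 : Fin 8) = e 0 (7 : Fin 8) := by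
    rw [omul_apply7, hW0, hW1, hW2, hW3, hW4, hW5, hW6, hW7, e0_7]
    field_simp
    ring
  have hXW : omul X W = e 0 := by
    funext k; fin_cases k
    exacts [g0, g1, g2, g3, g4, g5, g6, g7]
  have hWX : omul W X = e 0 := by
    funext k; fin_cases k
    exacts [f0, f1, f2, f3, f4, f5, f6, f7]
  refine ⟨W, ⟨hXW, hWX⟩, ?_⟩
  intro W' hW'
  obtain ⟨hw1, hw2⟩ := hW'
  calc W' = omul W' (e 0) := (omul_one W').symm
    _ = omul W' (omul X W) := by rw [hXW]
    _ = omul (omul W' X) W := (omul_assoc W' X W).symm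
    _ = omul (e 0) W := by rw [hw2]
    _ = W := one_omul W
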